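/- Let (f_n) and (g_n) be bounded sequences in L^r(ℝ) for some r ∈ (1,∞), such that g_n converges in L^r and almost everywhere, while f_n → 0 almost everywhere. Then ‖f_n + g_n‖_{L^r}^r = ‖f_n‖_{L^r}^r + ‖g_n‖_{L^r}^r + o(1) as n → ∞. -/

import Mathlib

open MeasureTheory Filter ENNReal


theorem BL.pow_diff {r M a b : ℝ} (hr : 1 ≤ r) (ha : 0 ≤ a) (hb : 0 ≤ b)
    (haM : a ≤ M) (hbM : b ≤ M) :
    |a ^ r - b ^ r| ≤ r * M ^ (r - 1) * |a - b| := by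
  have hr0 : (0:ℝ) ≤ r - 1 := by linarith
  have key : ∀ x ∈ Set.Icc (0:ℝ) M, HasDerivWithinAt (fun t : ℝ => t ^ r)
      (r * x ^ (r - 1)) (Set.Icc 0 M) x := fun x _ =>
    (Real.hasDerivAt_rpow_const (Or.inr hr)).hasDerivWithinAt
  have bound : ∀ x ∈ Set.Icc (0:ℝ) M, ‖r * x ^ (r - 1)‖ ≤ r * M ^ (r - 1) := by
    intro x hx
    obtain ⟨hx0, hxM⟩ := hx
    rw [Real.norm_eq_abs, abs_of_nonneg (by positivity)]
    gcongr
  have := (convex_Icc (0:ℝ) M).norm_image_sub_le_of_norm_hasDerivWithin_le key bound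
    ⟨hb, hbM⟩ ⟨ha, haM⟩
  simpa [Real.norm_eq_abs] using this

theorem BL.pointwise {r : ℝ} (hr1 : 1 < r) {ε : ℝ} (hε : 0 < ε) :
    ∃ C : ℝ, 0 ≤ C ∧ ∀ a b : ℂ, |‖a + b‖ ^ r - ‖a‖ ^ r| ≤ ε * ‖a‖ ^ r + C * ‖b‖ ^ r := by
  have hr0 : (0:ℝ) < r := lt_trans one_pos hr1
  have h2r : (0:ℝ) < r * 2 ^ (r - 1) := by positivity
  set δ : ℝ := min 1 (ε / (r * 2 ^ (r - 1))) with hδdef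
  have hδ : 0 < δ := lt_min one_pos (by positivity)
  refine ⟨r * (1 + 1 / δ) ^ (r - 1), by positivity, fun a b => ?_⟩
  have hx : (0:ℝ) ≤ ‖a‖ := norm_nonneg _
  have hy : (0:ℝ) ≤ ‖b‖ := norm_nonneg _
  have hs : (0:ℝ) ≤ ‖a + b‖ := norm_nonneg _
  set x := ‖a‖
  set y := ‖b‖
  set s := ‖a + b‖
  have hsxy : s ≤ x + y := norm_add_le _ _
  have hsx : |s - x| ≤ y := by
    simpa using abs_norm_sub_norm_le (a + b) a
  have main : |s ^ r - x ^ r| ≤ r * (x + y) ^ (r - 1) * y :=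
    calc |s ^ r - x ^ r| ≤ r * (x + y) ^ (r - 1) * |s - x| :=
          BL.pow_diff hr1.le hs hx hsxy (le_add_of_nonneg_right hy)
      _ ≤ r * (x + y) ^ (r - 1) * y := by
          exact mul_le_mul_of_nonneg_left hsx (by positivity)
  have hrhs1 : (0:ℝ) ≤ ε * x ^ r := by positivity
  have hrhs2 : (0:ℝ) ≤ r * (1 + 1 / δ) ^ (r - 1) * y ^ r := by positivity
  rcases le_or_gt y (δ * x) with hcase | hcase
  · -- small y
    rcases eq_or_lt_of_le hx with hx0 | hx0
    · -- x = 0, then y = 0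
      have hy0 : y = 0 := le_antisymm (by simpa [← hx0] using hcase) hy
      have hb0 : b = 0 := norm_eq_zero.mp hy0
      have hseq : s = x := by show ‖a + b‖ = ‖a‖; rw [hb0, add_zero]
      rw [hseq, sub_self, abs_zero]
      positivity
    · have hδ1 : δ ≤ 1 := min_le_left _ _
      have h2x : x + y ≤ 2 * x := by nlinarith
      have step : r * (x + y) ^ (r - 1) * y ≤ r * (2 * x) ^ (r - 1) * (δ * x) := by
        gcongr
      have expand : r * (2 * x) ^ (r - 1) * (δ * x) = r * 2 ^ (r - 1) * δ * x ^ r := by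
        rw [Real.mul_rpow (by norm_num) hx]
        rw [show r * (2 ^ (r - 1) * x ^ (r - 1)) * (δ * x)
            = r * 2 ^ (r - 1) * δ * (x ^ (r - 1) * x) by ring]
        rw [← Real.rpow_add_one (ne_of_gt hx0), sub_add_cancel]
      have hδε : r * 2 ^ (r - 1) * δ ≤ ε := by
        have : δ ≤ ε / (r * 2 ^ (r - 1)) := min_le_right _ _
        calc r * 2 ^ (r - 1) * δ ≤ r * 2 ^ (r - 1) * (ε / (r * 2 ^ (r - 1))) := by
              exact mul_le_mul_of_nonneg_left this h2r.le
          _ = ε := by field_simp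
      have : |s ^ r - x ^ r| ≤ ε * x ^ r := by
        refine main.trans (step.trans ?_)
        rw [expand]
        exact mul_le_mul_of_nonneg_right hδε (by positivity)
      linarith
  · -- large y
    have hy0 : 0 < y := lt_of_le_of_lt (by positivity) hcase
    have hxy : x + y ≤ (1 + 1 / δ) * y := by
      have h1 : x < y / δ := by
        rw [lt_div_iff₀ hδ]
        nlinarith [hcase]
      calc x + y ≤ y / δ + y := by linarith
        _ = (1 + 1 / δ) * y := by field_simp; ring
    have step : r * (x + y) ^ (r - 1) * y ≤ r * ((1 + 1 / δ) * y) ^ (r - 1) * y :=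
      mul_le_mul_of_nonneg_right (mul_le_mul_of_nonneg_left
        (Real.rpow_le_rpow (by positivity) hxy (by linarith)) hr0.le) hy
    have expand : r * ((1 + 1 / δ) * y) ^ (r - 1) * y = r * (1 + 1 / δ) ^ (r - 1) * y ^ r := by
      rw [Real.mul_rpow (by positivity) hy]
      rw [show r * ((1 + 1 / δ) ^ (r - 1) * y ^ (r - 1)) * y
          = r * (1 + 1 / δ) ^ (r - 1) * (y ^ (r - 1) * y) by ring]
      rw [← Real.rpow_add_one (ne_of_gt hy0), sub_add_cancel]
    have : |s ^ r - x ^ r| ≤ r * (1 + 1 / δ) ^ (r - 1) * y ^ r := by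
      refine main.trans (step.trans_eq expand)
    linarith

theorem BL.conv {r : ℝ} (hr1 : 1 < r) {u : ℝ → ℂ}
    (hu : MemLp u (ENNReal.ofReal r) volume) :
    (eLpNorm u (ENNReal.ofReal r) volume).toReal ^ r = ∫ x, ‖u x‖ ^ r := by
  have hr0 : (0:ℝ) < r := lt_trans one_pos hr1
  have hp0 : ENNReal.ofReal r ≠ 0 := by
    simp only [ne_eq, ENNReal.ofReal_eq_zero, not_le]; linarith
  have hint : (0:ℝ) ≤ ∫ x, ‖u x‖ ^ ((ENNReal.ofReal r).toReal) :=
    integral_nonneg fun x => Real.rpow_nonneg (norm_nonneg _) _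
  rw [hu.eLpNorm_eq_integral_rpow_norm hp0 ENNReal.ofReal_ne_top,
    ENNReal.toReal_ofReal (Real.rpow_nonneg hint _)]
  simp_rw [ENNReal.toReal_ofReal hr0.le] at hint ⊢
  rw [Real.rpow_inv_rpow hint (ne_of_gt hr0)]

theorem BL.cont {r : ℝ} (hr1 : 1 < r) (u v : ℕ → ℝ → ℂ)
    (hu : ∀ n, MemLp (u n) (ENNReal.ofReal r) volume)
    (hv : ∀ n, MemLp (v n) (ENNReal.ofReal r) volume)
    {D : ℝ≥0∞} (hD : D ≠ ⊤)
    (hub : ∀ n, eLpNorm (u n) (ENNReal.ofReal r) volume ≤ D)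
    (hvb : ∀ n, eLpNorm (v n) (ENNReal.ofReal r) volume ≤ D)
    (hdiff : Tendsto (fun n => eLpNorm (u n - v n) (ENNReal.ofReal r) volume)
      atTop (nhds 0)) :
    Tendsto (fun n => (∫ x, ‖u n x‖ ^ r) - ∫ x, ‖v n x‖ ^ r) atTop (nhds 0) := by
  have hr0 : (0:ℝ) < r := lt_trans one_pos hr1
  have hp1 : (1:ℝ≥0∞) ≤ ENNReal.ofReal r := by
    rw [← ENNReal.ofReal_one]; exact ENNReal.ofReal_le_ofReal hr1.le
  set a : ℕ → ℝ := fun n => (eLpNorm (u n) (ENNReal.ofReal r) volume).toReal with ha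
  set b : ℕ → ℝ := fun n => (eLpNorm (v n) (ENNReal.ofReal r) volume).toReal with hb
  set c : ℕ → ℝ := fun n => (eLpNorm (u n - v n) (ENNReal.ofReal r) volume).toReal with hc
  have hdfin : ∀ n, eLpNorm (u n - v n) (ENNReal.ofReal r) volume < ⊤ :=
    fun n => ((hu n).sub (hv n)).2
  have habc : ∀ n, |a n - b n| ≤ c n := by
    intro n
    have h1 : eLpNorm (u n) (ENNReal.ofReal r) volume ≤
        eLpNorm (v n) (ENNReal.ofReal r) volume +
          eLpNorm (u n - v n) (ENNReal.ofReal r) volume := by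
      have heq : u n = v n + (u n - v n) := by abel
      nth_rewrite 1 [heq]
      exact eLpNorm_add_le (hv n).1 ((hu n).sub (hv n)).1 hp1
    have h2 : eLpNorm (v n) (ENNReal.ofReal r) volume ≤
        eLpNorm (u n) (ENNReal.ofReal r) volume +
          eLpNorm (u n - v n) (ENNReal.ofReal r) volume := by
      have heq : v n = u n + (v n - u n) := by abel
      have hneg : eLpNorm (v n - u n) (ENNReal.ofReal r) volume =
          eLpNorm (u n - v n) (ENNReal.ofReal r) volume := by
        rw [show v n - u n = -(u n - v n) by abel, eLpNorm_neg]
      nth_rewrite 1 [heq]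
      rw [← hneg]
      exact eLpNorm_add_le (hu n).1 ((hv n).sub (hu n)).1 hp1
    rw [abs_sub_le_iff]
    constructor
    · have := ENNReal.toReal_mono (by
        exact ENNReal.add_ne_top.mpr ⟨(hv n).2.ne, (hdfin n).ne⟩) h1
      rw [ENNReal.toReal_add (hv n).2.ne (hdfin n).ne] at this
      simpa [a, b, c] using by linarith [this]
    · have := ENNReal.toReal_mono (by
        exact ENNReal.add_ne_top.mpr ⟨(hu n).2.ne, (hdfin n).ne⟩) h2
      rw [ENNReal.toReal_add (hu n).2.ne (hdfin n).ne] at this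
      simpa [a, b, c] using by linarith [this]
  have hcz : Tendsto c atTop (nhds 0) := by
    have := (ENNReal.tendsto_toReal (by simp : (0:ℝ≥0∞) ≠ ⊤)).comp hdiff
    simpa [hc, Function.comp_def] using this
  have haM : ∀ n, a n ≤ D.toReal := fun n => ENNReal.toReal_mono hD (hub n)
  have hbM : ∀ n, b n ≤ D.toReal := fun n => ENNReal.toReal_mono hD (hvb n)
  have key : ∀ n, |(∫ x, ‖u n x‖ ^ r) - ∫ x, ‖v n x‖ ^ r| ≤
      r * D.toReal ^ (r - 1) * c n := by
    intro n
    rw [← BL.conv hr1 (hu n), ← BL.conv hr1 (hv n)]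
    calc |a n ^ r - b n ^ r| ≤ r * D.toReal ^ (r - 1) * |a n - b n| :=
          BL.pow_diff hr1.le ENNReal.toReal_nonneg ENNReal.toReal_nonneg (haM n) (hbM n)
      _ ≤ r * D.toReal ^ (r - 1) * c n :=
          mul_le_mul_of_nonneg_left (habc n) (by positivity)
  rw [tendsto_zero_iff_norm_tendsto_zero]
  have hlim : Tendsto (fun n => r * D.toReal ^ (r - 1) * c n) atTop (nhds 0) := by
    simpa using hcz.const_mul (r * D.toReal ^ (r - 1))
  refine squeeze_zero (fun n => norm_nonneg _) (fun n => ?_) hlim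
  simpa [Real.norm_eq_abs] using key n

/-- Brézis–Lieb lemma for a sum of two sequences: if `(f_n)`, `(g_n)` are bounded
in `L^r`, `g_n` converges in `L^r` and a.e., and `f_n → 0` a.e., then
`‖f_n+g_n‖_r^r = ‖f_n‖_r^r + ‖g_n‖_r^r + o(1)`. -/
theorem brezis_lieb_sum (r : ℝ) (hr1 : 1 < r)
    (f g : ℕ → ℝ → ℂ) (glim : ℝ → ℂ)
    (hfm : ∀ n, AEStronglyMeasurable (f n) (volume : Measure ℝ))
    (hgm : ∀ n, AEStronglyMeasurable (g n) (volume : Measure ℝ))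
    (hbound : ∃ C : ℝ≥0∞, C < ⊤ ∧ ∀ n,
      eLpNorm (f n) (ENNReal.ofReal r) (volume : Measure ℝ) ≤ C ∧
      eLpNorm (g n) (ENNReal.ofReal r) (volume : Measure ℝ) ≤ C)
    (hgLr : Tendsto (fun n => eLpNorm (g n - glim) (ENNReal.ofReal r) (volume : Measure ℝ))
      atTop (nhds 0))
    (hgae : ∀ᵐ x : ℝ, Tendsto (fun n => g n x) atTop (nhds (glim x)))
    (hfae : ∀ᵐ x : ℝ, Tendsto (fun n => f n x) atTop (nhds 0)) :
    Tendsto (fun n =>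
        (eLpNorm (f n + g n) (ENNReal.ofReal r) (volume : Measure ℝ)).toReal ^ r -
        (eLpNorm (f n) (ENNReal.ofReal r) (volume : Measure ℝ)).toReal ^ r -
        (eLpNorm (g n) (ENNReal.ofReal r) (volume : Measure ℝ)).toReal ^ r)
      atTop (nhds 0) := by
  have hr0 : (0:ℝ) < r := lt_trans one_pos hr1
  have hp0 : ENNReal.ofReal r ≠ 0 := by
    simp only [ne_eq, ENNReal.ofReal_eq_zero, not_le]; linarith
  have hp1 : (1:ℝ≥0∞) ≤ ENNReal.ofReal r := by
    rw [← ENNReal.ofReal_one]; exact ENNReal.ofReal_le_ofReal hr1.le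
  have hpr : (ENNReal.ofReal r).toReal = r := ENNReal.toReal_ofReal hr0.le
  obtain ⟨C, hCfin, hCb⟩ := hbound
  have hfmem : ∀ n, MemLp (f n) (ENNReal.ofReal r) volume :=
    fun n => ⟨hfm n, lt_of_le_of_lt (hCb n).1 hCfin⟩
  have hgmem : ∀ n, MemLp (g n) (ENNReal.ofReal r) volume :=
    fun n => ⟨hgm n, lt_of_le_of_lt (hCb n).2 hCfin⟩
  have hglm : AEStronglyMeasurable glim volume :=
    aestronglyMeasurable_of_tendsto_ae atTop hgm hgae
  have hglimC : eLpNorm glim (ENNReal.ofReal r) volume ≤ C := by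
    refine le_trans (MeasureTheory.Lp.eLpNorm_lim_le_liminf_eLpNorm hgm glim hgae) ?_
    refine le_trans (liminf_le_liminf (Eventually.of_forall fun n => (hCb n).2)) ?_
    simp [liminf_const]
  have hglmem : MemLp glim (ENNReal.ofReal r) volume := ⟨hglm, lt_of_le_of_lt hglimC hCfin⟩
  have hfglmem : ∀ n, MemLp (f n + glim) (ENNReal.ofReal r) volume :=
    fun n => (hfmem n).add hglmem
  have hfgmem : ∀ n, MemLp (f n + g n) (ENNReal.ofReal r) volume :=
    fun n => (hfmem n).add (hgmem n)
  -- integrability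
  have meas_norm : ∀ (u : ℝ → ℂ), AEStronglyMeasurable u volume →
      AEStronglyMeasurable (fun x => ‖u x‖ ^ r) volume := fun u hu =>
    (Real.continuous_rpow_const hr0.le).comp_aestronglyMeasurable hu.norm
  have mk_int : ∀ (u : ℝ → ℂ), MemLp u (ENNReal.ofReal r) volume →
      Integrable (fun x => ‖u x‖ ^ r) volume := by
    intro u hu
    have := hu.integrable_norm_rpow hp0 ENNReal.ofReal_ne_top
    rwa [hpr] at this
  have intf : ∀ n, Integrable (fun x => ‖f n x‖ ^ r) volume := fun n => mk_int _ (hfmem n)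
  have intgl : Integrable (fun x => ‖glim x‖ ^ r) volume := mk_int _ hglmem
  have intfgl : ∀ n, Integrable (fun x => ‖f n x + glim x‖ ^ r) volume :=
    fun n => mk_int _ (hfglmem n)
  -- Term 1 : continuity in L^r
  have T1 : Tendsto (fun n => (∫ x, ‖f n x + g n x‖ ^ r) - ∫ x, ‖f n x + glim x‖ ^ r)
      atTop (nhds 0) := by
    have hb1 : ∀ n, eLpNorm (f n + g n) (ENNReal.ofReal r) volume ≤ C + C := fun n =>
      le_trans (eLpNorm_add_le (hfm n) (hgm n) hp1) (add_le_add (hCb n).1 (hCb n).2)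
    have hb2 : ∀ n, eLpNorm (f n + glim) (ENNReal.ofReal r) volume ≤ C + C := fun n =>
      le_trans (eLpNorm_add_le (hfm n) hglm hp1) (add_le_add (hCb n).1 hglimC)
    have hdiff : Tendsto
        (fun n => eLpNorm ((f n + g n) - (f n + glim)) (ENNReal.ofReal r) volume)
        atTop (nhds 0) := by
      have heq : ∀ n, (f n + g n) - (f n + glim) = g n - glim := fun n => by abel
      simpa only [heq] using hgLr
    have := BL.cont hr1 (fun n => f n + g n) (fun n => f n + glim) hfgmem hfglmem
      (ENNReal.add_ne_top.mpr ⟨hCfin.ne, hCfin.ne⟩) hb1 hb2 hdiff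
    simpa only [Pi.add_apply] using this
  -- Term 3
  have T3 : Tendsto (fun n => (∫ x, ‖glim x‖ ^ r) - ∫ x, ‖g n x‖ ^ r)
      atTop (nhds 0) := by
    have hb2 : ∀ (n : ℕ), eLpNorm glim (ENNReal.ofReal r) volume ≤ C := fun _ => hglimC
    have := (BL.cont hr1 g (fun _ => glim) hgmem (fun _ => hglmem)
      hCfin.ne (fun n => (hCb n).2) hb2 hgLr).neg
    simpa only [neg_sub, neg_zero] using this
  -- Term 2 : Brezis-Lieb core
  have T2 : Tendsto (fun n => (∫ x, ‖f n x + glim x‖ ^ r) - (∫ x, ‖f n x‖ ^ r)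
      - ∫ x, ‖glim x‖ ^ r) atTop (nhds 0) := by
    set K := C.toReal ^ r with hK
    have hK0 : 0 ≤ K := by positivity
    have hfK : ∀ n, (∫ x, ‖f n x‖ ^ r) ≤ K := by
      intro n
      rw [← BL.conv hr1 (hfmem n)]
      exact Real.rpow_le_rpow ENNReal.toReal_nonneg
        (ENNReal.toReal_mono hCfin.ne (hCb n).1) hr0.le
    rw [NormedAddCommGroup.tendsto_nhds_zero]
    intro ε hε
    have hε2 : 0 < ε / (2 * (K + 1)) := by positivity
    obtain ⟨Dc, hDc0, hDineq⟩ := BL.pointwise hr1 hε2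
    set ε' := ε / (2 * (K + 1)) with hε'def
    set φ : ℕ → ℝ → ℝ :=
      fun n x => |‖f n x + glim x‖ ^ r - ‖f n x‖ ^ r - ‖glim x‖ ^ r| with hφdef
    have hφbd : ∀ n x, φ n x ≤ ε' * ‖f n x‖ ^ r + (Dc + 1) * ‖glim x‖ ^ r := by
      intro n x
      have h1 := hDineq (f n x) (glim x)
      have h2 : φ n x ≤ |‖f n x + glim x‖ ^ r - ‖f n x‖ ^ r| + ‖glim x‖ ^ r := by
        refine le_trans (abs_sub _ _) ?_
        rw [abs_of_nonneg (Real.rpow_nonneg (norm_nonneg _) _)]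
      nlinarith [Real.rpow_nonneg (norm_nonneg (glim x)) r]
    have measφ : ∀ n, AEStronglyMeasurable (φ n) volume := fun n =>
      continuous_abs.comp_aestronglyMeasurable
        (((meas_norm _ ((hfm n).add hglm)).sub (meas_norm _ (hfm n))).sub
          (meas_norm _ hglm))
    have intφ : ∀ n, Integrable (φ n) volume := fun n =>
      (((intfgl n).sub (intf n)).sub intgl).abs
    set W : ℕ → ℝ → ℝ := fun n x => max (φ n x - ε' * ‖f n x‖ ^ r) 0 with hWdef
    have measW : ∀ n, AEStronglyMeasurable (W n) volume := fun n =>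
      (continuous_id.max continuous_const).comp_aestronglyMeasurable
        ((measφ n).sub ((meas_norm _ (hfm n)).const_mul ε'))
    have hWnonneg : ∀ n x, 0 ≤ W n x := fun n x => le_max_right _ _
    have hWle : ∀ n x, W n x ≤ (Dc + 1) * ‖glim x‖ ^ r := by
      intro n x
      refine max_le ?_ (by positivity)
      have := hφbd n x
      nlinarith [Real.rpow_nonneg (norm_nonneg (f n x)) r, hε2.le]
    have hWbound : ∀ n, ∀ᵐ x : ℝ, ‖W n x‖ ≤ (Dc + 1) * ‖glim x‖ ^ r :=
      fun n => Filter.Eventually.of_forall fun x => by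
        rw [Real.norm_eq_abs, abs_of_nonneg (hWnonneg n x)]; exact hWle n x
    have hWlim : ∀ᵐ x : ℝ, Tendsto (fun n => W n x) atTop (nhds 0) := by
      filter_upwards [hfae] with x hx
      have hn : Tendsto (fun n => ‖f n x‖) atTop (nhds 0) := by
        simpa using hx.norm
      have hnr : Tendsto (fun n => ‖f n x‖ ^ r) atTop (nhds 0) := by
        have h0 : (0:ℝ) ^ r = 0 := Real.zero_rpow (ne_of_gt hr0)
        have := (Real.continuousAt_rpow_const 0 r (Or.inr hr0.le)).tendsto.comp hn
        simpa [h0, Function.comp_def] using this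
      have hplus : Tendsto (fun n => ‖f n x + glim x‖ ^ r) atTop
          (nhds (‖glim x‖ ^ r)) := by
        have h1 : Tendsto (fun n => ‖f n x + glim x‖) atTop (nhds ‖glim x‖) := by
          have := (hx.add (tendsto_const_nhds (x := glim x))).norm
          simpa using this
        exact (Real.continuousAt_rpow_const ‖glim x‖ r (Or.inr hr0.le)).tendsto.comp h1
      have hφx : Tendsto (fun n => φ n x) atTop (nhds 0) := by
        have h2 := ((hplus.sub hnr).sub
          (tendsto_const_nhds (x := ‖glim x‖ ^ r))).abs
        simpa using h2
      have h3 := (hφx.sub (hnr.const_mul ε')).max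
        (tendsto_const_nhds (x := (0:ℝ)))
      simpa using h3
    have hgldom : Integrable (fun x => (Dc + 1) * ‖glim x‖ ^ r) volume :=
      intgl.const_mul _
    have hWint : Tendsto (fun n => ∫ x, W n x) atTop (nhds 0) := by
      have := tendsto_integral_of_dominated_convergence _ measW hgldom hWbound hWlim
      simpa using this
    have intW : ∀ n, Integrable (W n) volume := fun n =>
      hgldom.mono (measW n) ((hWbound n).mono fun x hx => by
        rwa [Real.norm_eq_abs (((Dc + 1) * ‖glim x‖ ^ r)),
          abs_of_nonneg (by positivity : (0:ℝ) ≤ (Dc + 1) * ‖glim x‖ ^ r)])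
    have hWsmall : ∀ᶠ n in atTop, (∫ x, W n x) < ε / 2 :=
      hWint.eventually_lt_const (by positivity)
    filter_upwards [hWsmall] with n hn
    have hptwise : ∀ x, φ n x ≤ W n x + ε' * ‖f n x‖ ^ r := by
      intro x
      have := le_max_left (φ n x - ε' * ‖f n x‖ ^ r) 0
      linarith
    have hint1 : (∫ x, φ n x) ≤ (∫ x, W n x) + ε' * ∫ x, ‖f n x‖ ^ r := by
      have h := integral_mono (intφ n) ((intW n).add ((intf n).const_mul ε'))
        hptwise
      simp only [Pi.add_apply] at h
      rwa [integral_add (intW n) ((intf n).const_mul ε'), integral_const_mul] at h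
    have habs : ‖(∫ x, ‖f n x + glim x‖ ^ r) - (∫ x, ‖f n x‖ ^ r)
        - ∫ x, ‖glim x‖ ^ r‖ ≤ ∫ x, φ n x := by
      rw [← integral_sub (intfgl n) (intf n),
        ← integral_sub (show Integrable
          (fun a => ‖f n a + glim a‖ ^ r - ‖f n a‖ ^ r) volume from
          (intfgl n).sub (intf n)) intgl]
      refine le_trans (norm_integral_le_integral_norm _) (le_of_eq ?_)
      simp only [hφdef, Real.norm_eq_abs]
    have hhalf : ε' * K ≤ ε / 2 := by
      have h1 : ε' * (K + 1) = ε / 2 := by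
        rw [hε'def]; field_simp
      nlinarith [hε2.le]
    have : ε' * (∫ x, ‖f n x‖ ^ r) ≤ ε' * K :=
      mul_le_mul_of_nonneg_left (hfK n) hε2.le
    calc ‖(∫ x, ‖f n x + glim x‖ ^ r) - (∫ x, ‖f n x‖ ^ r) - ∫ x, ‖glim x‖ ^ r‖
        ≤ ∫ x, φ n x := habs
      _ ≤ (∫ x, W n x) + ε' * ∫ x, ‖f n x‖ ^ r := hint1
      _ < ε := by linarith
  -- assemble
  have Tsum := (T1.add T2).add T3
  rw [show (0:ℝ) + 0 + 0 = 0 by ring] at Tsum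
  refine Tsum.congr fun n => ?_
  rw [BL.conv hr1 (hfgmem n), BL.conv hr1 (hfmem n), BL.conv hr1 (hgmem n)]
  simp only [Pi.add_apply]
  ring
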